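/- Let m be a positive integer and let R, S, T ⊆ ZMod m satisfy R = −R, T = −T, 0 ∉ R ∪ T and 0 ∈ S. The bicirculant B(m;R,S,T) is connected if and only if the gcd of m together with the canonical integer representatives of all elements of R ∪ S ∪ T equals 1. -/

import Mathlib

open SimpleGraph

/-- The bicirculant graph `B(m;R,S,T)` on vertex set `ZMod m ⊕ ZMod m`. -/
def bicirculant (m : ℕ) (R S T : Set (ZMod m)) : SimpleGraph (ZMod m ⊕ ZMod m) :=
  SimpleGraph.fromRel (fun x y =>
    match x, y with
    | Sum.inl i, Sum.inl i' => ∃ j ∈ R, i' = i + j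
    | Sum.inr i, Sum.inr i' => ∃ j ∈ T, i' = i + j
    | Sum.inl i, Sum.inr i' => ∃ j ∈ S, i' = i + j
    | Sum.inr _, Sum.inl _ => False)

/-- The gcd of `m` together with the canonical integer representatives of
all elements of a subset `X` of `ZMod m`. -/
noncomputable def famGcd (m : ℕ) [NeZero m] (X : Set (ZMod m)) : ℕ :=
  Nat.gcd m ((Set.toFinite X).toFinset.gcd ZMod.val)

section Aux

variable {m : ℕ} [NeZero m]

/-- cast of finset gcd of vals lies in the closure. -/
lemma gcd_cast_mem (X : Set (ZMod m)) (F : Finset (ZMod m)) (hF : ↑F ⊆ X) :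
    ((F.gcd ZMod.val : ℕ) : ZMod m) ∈ AddSubgroup.closure X := by
  classical
  induction F using Finset.induction_on with
  | empty => simpa using AddSubgroup.zero_mem _
  | insert a s ha ih =>
    have haX : a ∈ X := hF (by simp)
    have hsX : ↑s ⊆ X := fun x hx => hF (by simp [hx])
    have ihm := ih hsX
    rw [Finset.gcd_insert]
    have hb := Nat.gcd_eq_gcd_ab a.val (s.gcd ZMod.val)
    set A := Nat.gcdA a.val (s.gcd ZMod.val)
    set B := Nat.gcdB a.val (s.gcd ZMod.val)
    have key : ((GCDMonoid.gcd a.val (s.gcd ZMod.val) : ℕ) : ZMod m)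
        = A • a + B • ((s.gcd ZMod.val : ℕ) : ZMod m) := by
      have := congrArg (fun z : ℤ => (z : ZMod m)) hb
      push_cast at this
      rw [ZMod.natCast_val, ZMod.cast_id] at this
      simp only [zsmul_eq_mul]
      rw [show (GCDMonoid.gcd a.val (s.gcd ZMod.val)) = Nat.gcd a.val (s.gcd ZMod.val) from rfl]
      rw [this]; ring
    rw [key]
    exact AddSubgroup.add_mem _ (AddSubgroup.zsmul_mem _ (AddSubgroup.subset_closure haX) A)
      (AddSubgroup.zsmul_mem _ ihm B)

lemma val_dvd_of_mem_closure (X : Set (ZMod m)) {x : ZMod m}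
    (hx : x ∈ AddSubgroup.closure X) : famGcd m X ∣ x.val := by
  set d := famGcd m X with hd
  have hdm : d ∣ m := Nat.gcd_dvd_left _ _
  induction hx using AddSubgroup.closure_induction with
  | mem y hy =>
    exact (Nat.gcd_dvd_right _ _).trans
      (Finset.gcd_dvd ((Set.toFinite X).mem_toFinset.2 hy))
  | zero => simp
  | add y z hy hz ihy ihz =>
    rw [ZMod.val_add]
    exact (Nat.dvd_mod_iff hdm).2 (Nat.dvd_add ihy ihz)
  | neg y hy ihy =>
    rw [ZMod.neg_val]
    split
    · simp
    · exact Nat.dvd_sub hdm ihy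

lemma closure_eq_top_iff (X : Set (ZMod m)) :
    AddSubgroup.closure X = ⊤ ↔ famGcd m X = 1 := by
  constructor
  · intro h
    rcases eq_or_ne m 1 with hm | hm
    · subst hm; simp [famGcd]
    · have h1 : (1 : ZMod m) ∈ AddSubgroup.closure X := h ▸ AddSubgroup.mem_top _
      have hdvd := val_dvd_of_mem_closure X h1
      have hlt : 1 < m := lt_of_le_of_ne (Nat.one_le_iff_ne_zero.2 (NeZero.ne m)) (Ne.symm hm)
      haveI : Fact (1 < m) := ⟨hlt⟩
      rwa [ZMod.val_one, Nat.dvd_one] at hdvd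
  · intro h
    have h1 : (1 : ZMod m) ∈ AddSubgroup.closure X := by
      set g := (Set.toFinite X).toFinset.gcd ZMod.val with hg
      have hb := Nat.gcd_eq_gcd_ab m g
      rw [show Nat.gcd m g = famGcd m X from rfl, h] at hb
      have := congrArg (fun z : ℤ => (z : ZMod m)) hb
      push_cast at this
      rw [ZMod.natCast_self] at this
      have hgmem : ((g : ℕ) : ZMod m) ∈ AddSubgroup.closure X :=
        gcd_cast_mem X _ (by simp)
      have : (1 : ZMod m) = Nat.gcdB m g • ((g : ℕ) : ZMod m) := by
        rw [zsmul_eq_mul]; rw [this]; ring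
      rw [this]
      exact AddSubgroup.zsmul_mem _ hgmem _
    rw [eq_top_iff]
    intro a _
    have : a = a.val • (1 : ZMod m) := by
      rw [nsmul_eq_mul, mul_one, ZMod.natCast_val, ZMod.cast_id]
    rw [this]
    exact AddSubgroup.nsmul_mem _ h1 _

end Aux

section Graph

variable {m : ℕ} [NeZero m] {R S T : Set (ZMod m)}

lemma bicirculant_adj {x y : ZMod m ⊕ ZMod m} :
    (bicirculant m R S T).Adj x y ↔ x ≠ y ∧
      ((match x, y with
        | Sum.inl i, Sum.inl i' => ∃ j ∈ R, i' = i + j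
        | Sum.inr i, Sum.inr i' => ∃ j ∈ T, i' = i + j
        | Sum.inl i, Sum.inr i' => ∃ j ∈ S, i' = i + j
        | Sum.inr _, Sum.inl _ => False) ∨
       (match y, x with
        | Sum.inl i, Sum.inl i' => ∃ j ∈ R, i' = i + j
        | Sum.inr i, Sum.inr i' => ∃ j ∈ T, i' = i + j
        | Sum.inl i, Sum.inr i' => ∃ j ∈ S, i' = i + j
        | Sum.inr _, Sum.inl _ => False)) :=
  SimpleGraph.fromRel_adj _ _ _

/-- translation by `b` as a graph homomorphism -/
def trHom (R S T : Set (ZMod m)) (b : ZMod m) :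
    bicirculant m R S T →g bicirculant m R S T where
  toFun := Sum.map (· + b) (· + b)
  map_rel' := by
    intro x y h
    rw [bicirculant_adj] at h ⊢
    obtain ⟨hne, h⟩ := h
    constructor
    · intro hc
      apply hne
      have hinj : Function.Injective (Sum.map (· + b) (· + b) : ZMod m ⊕ ZMod m → _) :=
        Function.Injective.sumMap (add_left_injective b) (add_left_injective b)
      exact hinj hc
    · rcases x with i | i <;> rcases y with i' | i' <;>
        simp only [Sum.map_inl, Sum.map_inr] at *
      · rcases h with ⟨j, hj, rfl⟩ | ⟨j, hj, rfl⟩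
        · exact Or.inl ⟨j, hj, by ring⟩
        · exact Or.inr ⟨j, hj, by ring⟩
      · rcases h with ⟨j, hj, rfl⟩ | h
        · exact Or.inl ⟨j, hj, by ring⟩
        · exact h.elim
      · rcases h with h | ⟨j, hj, rfl⟩
        · exact h.elim
        · exact Or.inr ⟨j, hj, by ring⟩
      · rcases h with ⟨j, hj, rfl⟩ | ⟨j, hj, rfl⟩
        · exact Or.inl ⟨j, hj, by ring⟩
        · exact Or.inr ⟨j, hj, by ring⟩

lemma trHom_inl (b i : ZMod m) : trHom R S T b (Sum.inl i) = Sum.inl (i + b) := rfl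

lemma trHom_inr (b i : ZMod m) : trHom R S T b (Sum.inr i) = Sum.inr (i + b) := rfl

def idx : ZMod m ⊕ ZMod m → ZMod m := Sum.elim id id

lemma adj_diff {x y : ZMod m ⊕ ZMod m} (h : (bicirculant m R S T).Adj x y) :
    idx y - idx x ∈ AddSubgroup.closure (R ∪ S ∪ T) := by
  rw [bicirculant_adj] at h
  obtain ⟨-, h⟩ := h
  have hmem : ∀ j ∈ R ∪ S ∪ T, j ∈ AddSubgroup.closure (R ∪ S ∪ T) :=
    fun j hj => AddSubgroup.subset_closure hj
  rcases x with i | i <;> rcases y with i' | i' <;>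
    simp only [idx, Sum.elim_inl, Sum.elim_inr, id] <;>
    rcases h with h | h <;>
    first
    | exact h.elim
    | (obtain ⟨j, hj, rfl⟩ := h
       first
       | (simpa using hmem j (by simp [hj]))
       | (simpa using AddSubgroup.neg_mem _ (hmem j (by simp [hj]))))

lemma reach_diff {x y : ZMod m ⊕ ZMod m} (h : (bicirculant m R S T).Reachable x y) :
    idx y - idx x ∈ AddSubgroup.closure (R ∪ S ∪ T) := by
  obtain ⟨w⟩ := h
  induction w with
  | nil => simpa using AddSubgroup.zero_mem _
  | @cons u v z h p ih =>
    have : idx z - idx u = (idx z - idx v) + (idx v - idx u) := by ring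
    rw [this]
    exact AddSubgroup.add_mem _ ih (adj_diff h)

end Graph

/-- A bicirculant `B(m;R,S,T)` is connected iff `gcd(m, R, S, T) = 1`. -/
theorem bicirculant_connected_iff (m : ℕ) [NeZero m] (R S T : Set (ZMod m))
    (hR : R = -R) (hT : T = -T) (h0RT : (0 : ZMod m) ∉ R ∪ T) (h0S : (0 : ZMod m) ∈ S) :
    (bicirculant m R S T).Connected ↔ famGcd m (R ∪ S ∪ T) = 1 := by
  rw [← closure_eq_top_iff]
  constructor
  · intro h
    rw [eq_top_iff]
    intro a _
    have hr : (bicirculant m R S T).Reachable (Sum.inl 0) (Sum.inl a) := h (Sum.inl 0) (Sum.inl a)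
    simpa [idx] using reach_diff hr
  · intro h
    -- key: reachable inl 0 to inl a for all a
    have hrl : ∀ a : ZMod m, (bicirculant m R S T).Reachable (Sum.inl 0) (Sum.inl a) := by
      intro a
      have ha : a ∈ AddSubgroup.closure (R ∪ S ∪ T) := h ▸ AddSubgroup.mem_top a
      induction ha using AddSubgroup.closure_induction with
      | mem x hx =>
        have hxl : (bicirculant m R S T).Reachable (Sum.inr x) (Sum.inl x) := by
          apply SimpleGraph.Adj.reachable
          rw [bicirculant_adj]
          exact ⟨by simp, Or.inr ⟨0, h0S, by simp⟩⟩
        rcases hx with (hx | hx) | hx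
        · apply SimpleGraph.Adj.reachable
          rw [bicirculant_adj]
          refine ⟨?_, Or.inl ⟨x, hx, by simp⟩⟩
          simp only [ne_eq, Sum.inl.injEq]
          rintro rfl; exact h0RT (Or.inl hx)
        · refine SimpleGraph.Reachable.trans ?_ hxl
          apply SimpleGraph.Adj.reachable
          rw [bicirculant_adj]
          exact ⟨by simp, Or.inl ⟨x, hx, by simp⟩⟩
        · have h1 : (bicirculant m R S T).Reachable (Sum.inl 0) (Sum.inr 0) := by
            apply SimpleGraph.Adj.reachable
            rw [bicirculant_adj]
            exact ⟨by simp, Or.inl ⟨0, h0S, by simp⟩⟩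
          have h2 : (bicirculant m R S T).Reachable (Sum.inr (0 : ZMod m)) (Sum.inr x) := by
            apply SimpleGraph.Adj.reachable
            rw [bicirculant_adj]
            refine ⟨?_, Or.inl ⟨x, hx, by simp⟩⟩
            simp only [ne_eq, Sum.inr.injEq]
            rintro rfl; exact h0RT (Or.inr hx)
          exact ((h1.trans h2).trans hxl)
      | zero => exact SimpleGraph.Reachable.refl _
      | add x y hx hy ihx ihy =>
        have hmap := SimpleGraph.Reachable.map (trHom R S T x) ihy
        rw [trHom_inl, trHom_inl, zero_add] at hmap
        rw [add_comm x y]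
        exact ihx.trans hmap
      | neg x hx ihx =>
        have hmap := SimpleGraph.Reachable.map (trHom R S T (-x)) ihx
        rw [trHom_inl, trHom_inl, zero_add, add_neg_cancel] at hmap
        exact hmap.symm
    haveI : Nonempty (ZMod m ⊕ ZMod m) := ⟨Sum.inl 0⟩
    refine SimpleGraph.Connected.mk fun u v => ?_
    have key : ∀ w : ZMod m ⊕ ZMod m, (bicirculant m R S T).Reachable (Sum.inl 0) w := by
      intro w
      rcases w with a | a
      · exact hrl a
      · refine (hrl a).trans (SimpleGraph.Adj.reachable ?_)
        rw [bicirculant_adj]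
        exact ⟨by simp, Or.inl ⟨0, h0S, by simp⟩⟩
    exact (key u).symm.trans (key v)
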